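/- On a connected balanced digraph, the last-exit arrows of a closed Eulerian tour form an oriented spanning tree rooted at the starting vertex: if for each vertex x other than the start one records the last arrow of the tour exiting x, this set of arrows contains no directed cycle and connects every vertex to the start. -/

import Mathlib

/-- The number of transitions `b → a` along the path `x`. -/
def flux {X : Type*} [DecidableEq X] {N : ℕ} (x : Fin (N + 1) → X) (a b : X) : ℕ :=
  (Finset.univ.filter (fun i : Fin N => x i.succ = a ∧ x i.castSucc = b)).card

/-- on a connected balanced digraph, the last-exit arrows of a closed
Eulerian tour form an oriented spanning tree rooted at the starting vertex: recording,
for each `x ≠ x₀`, the endpoint `f x` of the last arrow of the tour exiting `x`, the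
resulting arrows contain no directed cycle and connect every vertex to `x₀`
(i.e. iterating `f` from any vertex reaches `x₀`). -/
theorem lastExit_spanning_tree {X : Type*} [Fintype X] [DecidableEq X]
    (φ : X → X → ℕ) (x₀ : X) {M : ℕ}
    (hconn : ∀ a b : X, Relation.ReflTransGen (fun u v => 0 < φ u v + φ v u) a b)
    (hbal : ∀ a : X, ∑ y, φ a y = ∑ y, φ y a)
    (p : Fin (M + 1) → X)
    (hstart : p 0 = x₀) (hend : p (Fin.last M) = x₀)
    (htour : ∀ a b, flux p a b = φ a b) (hM : M = ∑ a, ∑ b, φ a b) :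
    ∃ f : X → X, f x₀ = x₀ ∧
      (∀ x, x ≠ x₀ → ∃ i : Fin M, p i.castSucc = x ∧ p i.succ = f x ∧
        ∀ j : Fin M, p j.castSucc = x → j ≤ i) ∧
      ∀ x : X, ∃ n : ℕ, f^[n] x = x₀ := by
  classical
  set T : X → Finset (Fin M) := fun x =>
    Finset.univ.filter (fun i : Fin M => p i.castSucc = x) with hT
  have hTne : ∀ x, x ≠ x₀ → (T x).Nonempty := by
    intro x hx
    rcases (hconn x x₀).cases_head with h | ⟨v, hv, -⟩
    · exact absurd h hx
    · have hpos : 0 < ∑ a, φ a x := by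
        rcases Nat.lt_or_ge 0 (φ v x) with h1 | h1
        · exact lt_of_lt_of_le h1
            (Finset.single_le_sum (f := fun a => φ a x) (fun a _ => Nat.zero_le _)
              (Finset.mem_univ v))
        · have h2 : 0 < φ x v := by omega
          have : 0 < ∑ y, φ x y := lt_of_lt_of_le h2
            (Finset.single_le_sum (f := fun y => φ x y) (fun a _ => Nat.zero_le _)
              (Finset.mem_univ v))
          rwa [hbal x] at this
      have hpos' : 0 < ∑ a, flux p a x := by
        simpa only [htour] using hpos
      obtain ⟨a, -, ha⟩ := Finset.exists_lt_of_sum_lt (by simpa using hpos' : ∑ a : X, (0:ℕ) < ∑ a, flux p a x)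
      unfold flux at ha
      obtain ⟨i, hi⟩ := Finset.card_pos.mp ha
      simp only [Finset.mem_filter, Finset.mem_univ, true_and] at hi
      exact ⟨i, by simp [hT, hi.2]⟩
  refine ⟨fun x => if hx : x = x₀ then x₀ else p ((T x).max' (hTne x hx)).succ,
    by simp, ?_, ?_⟩
  · intro x hx
    refine ⟨(T x).max' (hTne x hx), ?_, by simp [hx], ?_⟩
    · have := (T x).max'_mem (hTne x hx)
      simpa [hT] using this
    · intro j hj
      exact (T x).le_max' j (by simp [hT, hj])
  · -- termination argument
    set f : X → X := fun x => if hx : x = x₀ then x₀ else p ((T x).max' (hTne x hx)).succ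
      with hf
    set r : X → ℕ := fun x => if hx : x = x₀ then M + 1 else M - ((T x).max' (hTne x hx)).val
      with hr
    have key : ∀ x (hx : x ≠ x₀), f x ≠ x₀ → r (f x) < r x := by
      intro x hx hfx
      set i := (T x).max' (hTne x hx) with hi
      have hfxv : f x = p i.succ := by simp [hf, hx]; rfl
      have hiM : i.val < M := i.isLt
      have hlt : i.val + 1 < M := by
        by_contra h
        have hvm : i.val + 1 = M := by omega
        have : i.succ = Fin.last M := Fin.ext (by simp [hvm])
        exact hfx (by rw [hfxv, this, hend])
      have hj : (⟨i.val + 1, hlt⟩ : Fin M) ∈ T (f x) := by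
        have : p (⟨i.val + 1, hlt⟩ : Fin M).castSucc = p i.succ :=
          congrArg p (Fin.ext (by simp))
        simp only [hT, Finset.mem_filter, Finset.mem_univ, true_and]
        rw [hfxv]; exact this
      have hle : i.val + 1 ≤ ((T (f x)).max' (hTne (f x) hfx)).val :=
        (T (f x)).le_max' _ hj
      have h2 : ((T (f x)).max' (hTne (f x) hfx)).val < M :=
        ((T (f x)).max' (hTne (f x) hfx)).isLt
      simp only [hr, dif_neg hx, dif_neg hfx]
      omega
    have main : ∀ n x, r x ≤ n → ∃ k, f^[k] x = x₀ := by
      intro n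
      induction n with
      | zero =>
        intro x hx
        by_cases h : x = x₀
        · exact ⟨0, h⟩
        · exfalso
          have : r x = M - ((T x).max' (hTne x h)).val := by simp [hr, h]
          have := ((T x).max' (hTne x h)).isLt
          omega
      | succ n ih =>
        intro x hx
        by_cases h : x = x₀
        · exact ⟨0, h⟩
        by_cases h2 : f x = x₀
        · exact ⟨1, by simpa using h2⟩
        · have hlt := key x h h2
          obtain ⟨k, hk⟩ := ih (f x) (by omega)
          exact ⟨k + 1, by rwa [Function.iterate_succ_apply]⟩
    intro x
    exact main (r x) x le_rfl
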